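/- Let G be a k-connected split graph with partition V(G) = I ∪ K into a stable set I and a clique K, and suppose |V(G)| ≥ k+2. Then every edge e = {u,v} with u ∈ K and v ∈ I is contractible. -/

import Mathlib

open SimpleGraph

/-- `S` is a vertex separator of `G`: deleting `S` leaves a disconnected graph
(two vertices with no path between them). -/
def IsSeparator {V : Type*} (G : SimpleGraph V) (S : Set V) : Prop :=
  ¬ (G.induce (Sᶜ : Set V)).Preconnected

/-- `S` is a minimal vertex separator of `G`. -/
def MinimalSeparator {V : Type*} (G : SimpleGraph V) (S : Set V) : Prop :=
  IsSeparator G S ∧ ∀ S' ⊂ S, ¬ IsSeparator G S'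

/-- `G` is `k`-connected: more than `k` vertices and every separator has size at least `k`. -/
def KConnected {V : Type*} [Fintype V] (k : ℕ) (G : SimpleGraph V) : Prop :=
  k < Fintype.card V ∧ ∀ S : Set V, IsSeparator G S → k ≤ S.ncard

/-- Vertex connectivity: least size of a set whose removal disconnects the graph
or leaves at most one vertex. -/
noncomputable def vConn {V : Type*} [Fintype V] (G : SimpleGraph V) : ℕ :=
  sInf {n | ∃ S : Set V, S.ncard = n ∧ (IsSeparator G S ∨ (Sᶜ : Set V).ncard ≤ 1)}

/-- Contraction of the edge `{u,v}`: the vertex `v` is deleted and `u` plays the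
role of the merged vertex `z`, adjacent to all former neighbors of `u` or `v`. -/
def contract {V : Type*} (G : SimpleGraph V) (u v : V) :
    SimpleGraph {x : V // x ≠ v} where
  Adj a b := a ≠ b ∧ (G.Adj a b ∨ (a.1 = u ∧ G.Adj v b) ∨ (b.1 = u ∧ G.Adj v a))
  symm := by
    constructor
    rintro a b ⟨h1, h2 | ⟨h3, h4⟩ | ⟨h3, h4⟩⟩
    · exact ⟨h1.symm, Or.inl h2.symm⟩
    · exact ⟨h1.symm, Or.inr (Or.inr ⟨h3, h4⟩)⟩
    · exact ⟨h1.symm, Or.inr (Or.inl ⟨h3, h4⟩)⟩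
  loopless := by constructor; rintro a ⟨h, -⟩; exact h rfl

/-- A tree decomposition of `G` with tree `T` and bags `l`. -/
structure TreeDecomp {V ι : Type*} (G : SimpleGraph V) (T : SimpleGraph ι)
    (l : ι → Set V) : Prop where
  conn : T.Connected
  acyclic : T.IsAcyclic
  coversV : ∀ v : V, ∃ x : ι, v ∈ l x
  coversE : ∀ ⦃u v : V⦄, G.Adj u v → ∃ x : ι, u ∈ l x ∧ v ∈ l x
  subtree : ∀ v : V, (T.induce {x : ι | v ∈ l x}).Connected

/-- A clique tree of `G`: a tree decomposition whose bags are exactly the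
maximal cliques of `G`. -/
def IsCliqueTree {V ι : Type*} (G : SimpleGraph V) (T : SimpleGraph ι)
    (l : ι → Set V) : Prop :=
  TreeDecomp G T l ∧ (∀ x : ι, Maximal G.IsClique (l x)) ∧
    ∀ C : Set V, Maximal G.IsClique C → ∃ x : ι, l x = C

/-- `G` is chordal: every cycle of length at least 4 has a chord. -/
def IsChordal {V : Type*} (G : SimpleGraph V) : Prop :=
  ∀ (v : V) (w : G.Walk v v), w.IsCycle → 4 ≤ w.length →
    ∃ a b : V, G.Adj a b ∧ a ∈ w.support ∧ b ∈ w.support ∧ s(a, b) ∉ w.edges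

/-- A split partition of `G`: `I` is a stable set, `K` a clique, partitioning the vertices. -/
def IsSplitPartition {V : Type*} (G : SimpleGraph V) (I K : Set V) : Prop :=
  I ∪ K = Set.univ ∧ Disjoint I K ∧ (∀ a ∈ I, ∀ b ∈ I, ¬ G.Adj a b) ∧ G.IsClique K

lemma reach_map {α β} {H1 : SimpleGraph α} {H2 : SimpleGraph β} (f : α → β)
    (h : ∀ a b, H1.Adj a b → H2.Adj (f a) (f b) ∨ f a = f b) {a b : α}
    (hr : H1.Reachable a b) : H2.Reachable (f a) (f b) := by
  obtain ⟨w⟩ := hr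
  induction w with
  | nil => exact Reachable.refl _
  | cons hadj _ ih =>
      rcases h _ _ hadj with h' | h'
      · exact (h'.reachable).trans ih
      · rw [h']; exact ih

lemma key {V : Type*} [Fintype V] (G : SimpleGraph V) (k : ℕ) (I K : Set V)
    (hsplit : IsSplitPartition G I K) (hcard : k + 2 ≤ Fintype.card V)
    (hconn : KConnected k G) (v : V) (hv : v ∈ I) (T : Set V) (hvT : v ∈ T)
    (hT : (T \ {v}).ncard < k) (hsep : IsSeparator G T) : False := by
  obtain ⟨hIK, hdisj, hstab, hclK⟩ := hsplit
  have memK : ∀ x : V, x ∉ I → x ∈ K := by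
    intro x hx
    have := Set.mem_univ x
    rw [← hIK] at this
    exact this.resolve_left hx
  by_cases hb : ∃ b' : V, b' ∈ I ∧ b' ∉ T ∧ ∀ c, G.Adj b' c → c ∈ T
  · obtain ⟨b', hbI, hbT, hN⟩ := hb
    set N : Set V := {c | G.Adj b' c} with hNdef
    -- N ⊆ T \ {v}
    have hNsub : N ⊆ T \ {v} := by
      intro c hc
      refine ⟨hN c hc, ?_⟩
      rintro rfl
      exact hstab b' hbI c hv hc
    have hNcard : N.ncard < k := lt_of_le_of_lt (Set.ncard_le_ncard hNsub (Set.toFinite _)) hT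
    -- N is a separator
    have hbN : b' ∈ (Nᶜ : Set V) := by simp [hNdef]
    have hcompl : 1 < (Nᶜ : Set V).ncard := by
      have := Set.ncard_add_ncard_compl N
      rw [Nat.card_eq_fintype_card] at this
      omega
    obtain ⟨c, hcN, hcb⟩ := Set.exists_ne_of_one_lt_ncard hcompl b'
    have : IsSeparator G N := by
      intro hpre
      obtain ⟨w⟩ := hpre ⟨b', hbN⟩ ⟨c, hcN⟩
      cases w with
      | nil => exact hcb rfl
      | cons hadj _ =>
          rename_i x _
          have : G.Adj b' x.1 := hadj
          exact x.2 this
    have := hconn.2 N this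
    omega
  · push_neg at hb
    apply hsep
    intro a b
    have step : ∀ a : ↥(Tᶜ : Set V), ∃ a' : ↥(Tᶜ : Set V), a'.1 ∈ K ∧
        (G.induce (Tᶜ : Set V)).Reachable a a' := by
      intro a
      by_cases haK : a.1 ∈ K
      · exact ⟨a, haK, Reachable.refl a⟩
      · have haI : a.1 ∈ I := by
          have := Set.mem_univ a.1
          rw [← hIK] at this
          exact this.resolve_right haK
        obtain ⟨c, hac, hcT⟩ := hb a.1 haI a.2
        have hcK : c ∈ K := by
          apply memK
          intro hcI
          exact hstab a.1 haI c hcI hac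
        refine ⟨⟨c, hcT⟩, hcK, ?_⟩
        exact Adj.reachable (by exact hac : (G.induce (Tᶜ : Set V)).Adj a ⟨c, hcT⟩)
    obtain ⟨a', haK, hra⟩ := step a
    obtain ⟨b', hbK, hrb⟩ := step b
    refine hra.trans (Reachable.trans ?_ hrb.symm)
    by_cases hab : a' = b'
    · rw [hab]
    · have : G.Adj a'.1 b'.1 := hclK haK hbK (fun h => hab (Subtype.ext h))
      exact Adj.reachable (this : (G.induce (Tᶜ : Set V)).Adj a' b')


/-- In a `k`-connected split graph with at least `k+2` vertices,
every edge between the clique side and the stable side is contractible. -/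
theorem stmt_11 {V : Type*} [Fintype V] [DecidableEq V] (G : SimpleGraph V) (k : ℕ)
    (I K : Set V) (hsplit : IsSplitPartition G I K)
    (hcard : k + 2 ≤ Fintype.card V) (hconn : KConnected k G)
    (u v : V) (hu : u ∈ K) (hv : v ∈ I) (he : G.Adj u v) :
    KConnected k (contract G u v) := by
  have huv : u ≠ v := he.ne
  constructor
  · have h1 : Fintype.card {x : V // x ≠ v} = Fintype.card V - 1 := by
      simp [Fintype.card_subtype_compl]
    omega
  · intro S hsepS
    set z : {x : V // x ≠ v} := ⟨u, huv⟩ with hzdef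
    by_cases hz : z ∈ S
    · by_contra hlt
      push_neg at hlt
      set T : Set V := (Subtype.val '' (S \ {z})) ∪ {u, v} with hTdef
      have hvT : v ∈ T := by simp [hTdef]
      have huT : u ∈ T := by simp [hTdef]
      have hSfin : S.Finite := Set.toFinite _
      have hSpos : 1 ≤ S.ncard := (Set.ncard_pos (Set.toFinite S)).mpr ⟨z, hz⟩
      have hTcard : (T \ {v}).ncard < k := by
        have hsub : T \ {v} ⊆ insert u (Subtype.val '' (S \ {z})) := by
          rintro x ⟨hxT, hxv⟩
          simp only [hTdef, Set.mem_union, Set.mem_insert_iff, Set.mem_singleton_iff] at hxT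
          rcases hxT with h | h | h
          · exact Set.mem_insert_of_mem _ h
          · exact Or.inl h
          · exact absurd h hxv
        have h1 : (Subtype.val '' (S \ {z})).ncard = S.ncard - 1 := by
          rw [Set.ncard_image_of_injective _ Subtype.val_injective,
            Set.ncard_diff_singleton_of_mem hz]
        calc (T \ {v}).ncard ≤ (insert u (Subtype.val '' (S \ {z}))).ncard :=
              Set.ncard_le_ncard hsub (Set.toFinite _)
          _ ≤ (Subtype.val '' (S \ {z})).ncard + 1 := Set.ncard_insert_le _ _
          _ = S.ncard := by omega
          _ < k := hlt
      have hTsep : IsSeparator G T := by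
        intro hpre
        apply hsepS
        intro a b
        -- map from ↥Tᶜ to ↥Sᶜ
        have hmem : ∀ x : ↥(Tᶜ : Set V), ∃ h : x.1 ≠ v, (⟨x.1, h⟩ : {x : V // x ≠ v}) ∈ (Sᶜ : Set ({x : V // x ≠ v})) := by
          intro x
          have hxT := x.2
          simp only [hTdef, Set.mem_compl_iff, Set.mem_union, Set.mem_insert_iff,
            Set.mem_singleton_iff, not_or] at hxT
          obtain ⟨hximg, hxu, hxv⟩ := hxT
          refine ⟨hxv, ?_⟩
          intro hxS
          by_cases hxz : (⟨x.1, hxv⟩ : {x : V // x ≠ v}) = z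
          · exact hxu (congrArg Subtype.val hxz)
          · exact hximg ⟨⟨x.1, hxv⟩, ⟨hxS, hxz⟩, rfl⟩
        set f : ↥(Tᶜ : Set V) → ↥(Sᶜ : Set ({x : V // x ≠ v})) :=
          fun x => ⟨⟨x.1, (hmem x).1⟩, (hmem x).2⟩ with hfdef
        have hadj : ∀ x y, (G.induce (Tᶜ : Set V)).Adj x y →
            ((contract G u v).induce (Sᶜ : Set ({x : V // x ≠ v}))).Adj (f x) (f y) ∨ f x = f y := by
          intro x y h
          left
          have hG : G.Adj x.1 y.1 := h
          refine ⟨?_, Or.inl hG⟩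
          intro hh
          have h2 := congrArg Subtype.val hh
          exact hG.ne h2
        -- endpoints
        have hend : ∀ a : ↥(Sᶜ : Set ({x : V // x ≠ v})), ∃ a₀ : ↥(Tᶜ : Set V), f a₀ = a := by
          intro a
          have haT : a.1.1 ∈ (Tᶜ : Set V) := by
            simp only [hTdef, Set.mem_compl_iff, Set.mem_union, Set.mem_insert_iff,
              Set.mem_singleton_iff, not_or]
            refine ⟨?_, ?_, a.1.2⟩
            · rintro ⟨s, hs, hval⟩
              have : s = a.1 := Subtype.ext hval
              rw [this] at hs
              exact a.2 hs.1
            · intro h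
              apply a.2
              have : a.1 = z := Subtype.ext h
              rw [this]; exact hz
          exact ⟨⟨a.1.1, haT⟩, Subtype.ext (Subtype.ext rfl)⟩
        obtain ⟨a₀, ha₀⟩ := hend a
        obtain ⟨b₀, hb₀⟩ := hend b
        rw [← ha₀, ← hb₀]
        exact reach_map f hadj (hpre a₀ b₀)
      exact key G k I K ⟨hsplit.1, hsplit.2.1, hsplit.2.2.1, hsplit.2.2.2⟩ hcard hconn v hv T hvT hTcard hTsep
    · -- z ∉ S
      set S' : Set V := Subtype.val '' S with hS'def
      have hsep' : IsSeparator G S' := by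
        intro hpre
        apply hsepS
        intro a b
        have hmem : ∀ x : ↥(S'ᶜ : Set V), x.1 ≠ v → ∀ h : x.1 ≠ v,
            (⟨x.1, h⟩ : {x : V // x ≠ v}) ∈ (Sᶜ : Set ({x : V // x ≠ v})) := by
          intro x _ h hxS
          exact x.2 ⟨⟨x.1, h⟩, hxS, rfl⟩
        set f : ↥(S'ᶜ : Set V) → ↥(Sᶜ : Set ({x : V // x ≠ v})) := fun x =>
          if h : x.1 = v then ⟨z, hz⟩ else ⟨⟨x.1, h⟩, hmem x h h⟩ with hfdef
        have hadj : ∀ x y, (G.induce (S'ᶜ : Set V)).Adj x y →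
            ((contract G u v).induce (Sᶜ : Set ({x : V // x ≠ v}))).Adj (f x) (f y) ∨ f x = f y := by
          intro x y h
          have hG : G.Adj x.1 y.1 := h
          have hxy : x.1 ≠ y.1 := hG.ne
          by_cases hx : x.1 = v
          · have hy : y.1 ≠ v := fun hh => hxy (hx.trans hh.symm)
            by_cases hyu : y.1 = u
            · right
              simp only [hfdef, dif_pos hx, dif_neg hy]
              exact Subtype.ext (Subtype.ext hyu.symm)
            · left
              simp only [hfdef, dif_pos hx, dif_neg hy]
              have hGv : G.Adj v y.1 := by rw [← hx]; exact hG
              refine ⟨?_, Or.inr (Or.inl ⟨rfl, hGv⟩)⟩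
              intro hh
              have h2 := congrArg Subtype.val hh
              exact hyu h2.symm
          · by_cases hy : y.1 = v
            · by_cases hxu : x.1 = u
              · right
                simp only [hfdef, dif_pos hy, dif_neg hx]
                exact Subtype.ext (Subtype.ext hxu)
              · left
                simp only [hfdef, dif_pos hy, dif_neg hx]
                have hGv : G.Adj v x.1 := by rw [← hy]; exact hG.symm
                refine ⟨?_, Or.inr (Or.inr ⟨rfl, hGv⟩)⟩
                intro hh
                have h2 := congrArg Subtype.val hh
                exact hxu h2
            · left
              simp only [hfdef, dif_neg hx, dif_neg hy]
              refine ⟨?_, Or.inl hG⟩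
              intro hh
              have h2 := congrArg Subtype.val hh
              exact hxy h2
        have hend : ∀ a : ↥(Sᶜ : Set ({x : V // x ≠ v})), ∃ a₀ : ↥(S'ᶜ : Set V), f a₀ = a := by
          intro a
          have haS' : a.1.1 ∈ (S'ᶜ : Set V) := by
            rintro ⟨s, hs, hval⟩
            exact a.2 (Subtype.ext hval ▸ hs)
          refine ⟨⟨a.1.1, haS'⟩, ?_⟩
          simp only [hfdef, dif_neg a.1.2]
        obtain ⟨a₀, ha₀⟩ := hend a
        obtain ⟨b₀, hb₀⟩ := hend b
        rw [← ha₀, ← hb₀]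
        exact reach_map f hadj (hpre a₀ b₀)
      have := hconn.2 S' hsep'
      rwa [hS'def, Set.ncard_image_of_injective _ Subtype.val_injective] at this
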